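/- Fix a real number r with r > 1, and let D = {(p,q) : 0 < p ≤ 1, 0 < q ≤ 1, p·q < 1/r}. Define E on D by E(p,q) = log( 2p(1−q) / ( √((1−p)² + 4p(1−q)(1/r − p·q)) − (1−p) ) ) when q < 1, and E(p,1) = log( (1−p)/(1/r − p) ). Then the infimum of E over D equals (1/2)·log r. -/
import Mathlib

open Real Filter Set

set_option maxHeartbeats 800000

theorem stmt_13 (r : ℝ) (hr : 1 < r) :
    sInf {x : ℝ | ∃ p q : ℝ, 0 < p ∧ p ≤ 1 ∧ 0 < q ∧ q ≤ 1 ∧ p * q < 1 / r ∧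
      x = if q < 1 then
            Real.log (2 * p * (1 - q) /
              (Real.sqrt ((1 - p) ^ 2 + 4 * p * (1 - q) * (1 / r - p * q)) - (1 - p)))
          else
            Real.log ((1 - p) / (1 / r - p))} = (1 / 2) * Real.log r := by
  set S := {x : ℝ | ∃ p q : ℝ, 0 < p ∧ p ≤ 1 ∧ 0 < q ∧ q ≤ 1 ∧ p * q < 1 / r ∧
      x = if q < 1 then
            Real.log (2 * p * (1 - q) /
              (Real.sqrt ((1 - p) ^ 2 + 4 * p * (1 - q) * (1 / r - p * q)) - (1 - p)))
          else
            Real.log ((1 - p) / (1 / r - p))} with hSdef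
  have hr0 : (0:ℝ) < r := lt_trans one_pos hr
  have hs0 : (0:ℝ) < 1 / r := by positivity
  have hs1 : 1 / r < 1 := by rw [div_lt_one hr0]; exact hr
  set t := Real.sqrt (1 / r) with ht
  have ht0 : 0 < t := Real.sqrt_pos.mpr hs0
  have ht1 : t < 1 := by
    have := Real.sqrt_lt_sqrt hs0.le hs1
    simpa [ht] using this
  have ht2 : t ^ 2 = 1 / r := Real.sq_sqrt hs0.le
  have hlog : Real.log (1 / t) = 1 / 2 * Real.log r := by
    rw [one_div, Real.log_inv, ht, Real.log_sqrt hs0.le, one_div, Real.log_inv]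
    ring
  -- lower bound
  have lb : ∀ x ∈ S, (1 / 2) * Real.log r ≤ x := by
    rintro x ⟨p, q, hp, hp1, hq, hq1, hpq, rfl⟩
    by_cases hqlt : q < 1
    · rw [if_pos hqlt]
      have h1q : 0 < 1 - q := by linarith
      have hsp : 0 < 1 / r - p * q := by linarith
      have hB : 0 < 4 * p * (1 - q) * (1 / r - p * q) := by
        apply mul_pos (mul_pos (by linarith) h1q) hsp
      have hA : 0 ≤ 1 - p := by linarith
      have hN : 0 ≤ t * (2 * p * (1 - q)) := by
        apply mul_nonneg ht0.le (by nlinarith)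
      have hbr : 1 / r - p * q ≤ (1 - p) * t + p * (1 - q) * (1 / r) := by
        rw [← ht2]
        nlinarith [mul_nonneg (mul_nonneg hp.le hq.le) (by nlinarith : (0:ℝ) ≤ 1 - t ^ 2),
          mul_nonneg hA (by nlinarith : (0:ℝ) ≤ t - t ^ 2)]
      have key : (1 - p) ^ 2 + 4 * p * (1 - q) * (1 / r - p * q)
          ≤ ((1 - p) + t * (2 * p * (1 - q))) ^ 2 := by
        have h4 : (0:ℝ) ≤ 4 * p * (1 - q) := by nlinarith
        have hbr' := mul_le_mul_of_nonneg_left hbr h4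
        rw [← ht2] at hbr' ⊢
        nlinarith [hbr']
      have hsq : Real.sqrt ((1 - p) ^ 2 + 4 * p * (1 - q) * (1 / r - p * q))
          ≤ (1 - p) + t * (2 * p * (1 - q)) := by
        have h := Real.sqrt_le_sqrt key
        rwa [Real.sqrt_sq (by linarith)] at h
      have hden : 0 < Real.sqrt ((1 - p) ^ 2 + 4 * p * (1 - q) * (1 / r - p * q)) - (1 - p) := by
        have h1 : Real.sqrt ((1 - p) ^ 2) <
            Real.sqrt ((1 - p) ^ 2 + 4 * p * (1 - q) * (1 / r - p * q)) :=
          Real.sqrt_lt_sqrt (sq_nonneg _) (by linarith)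
        rw [Real.sqrt_sq hA] at h1
        linarith
      have hratio : 1 / t ≤ 2 * p * (1 - q) /
          (Real.sqrt ((1 - p) ^ 2 + 4 * p * (1 - q) * (1 / r - p * q)) - (1 - p)) := by
        rw [div_le_div_iff₀ ht0 hden]
        linarith [hsq]
      calc (1 / 2) * Real.log r = Real.log (1 / t) := hlog.symm
        _ ≤ _ := Real.log_le_log (by positivity) hratio
    · rw [if_neg hqlt]
      have hq1' : q = 1 := le_antisymm hq1 (not_lt.mp hqlt)
      subst hq1'
      have hp' : p < 1 / r := by linarith [hpq, mul_one p]
      have hnum : 0 < 1 - p := by linarith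
      have hden : 0 < 1 / r - p := by linarith
      have hratio : 1 / t ≤ (1 - p) / (1 / r - p) := by
        rw [div_le_div_iff₀ ht0 hden, ← ht2]
        nlinarith [mul_nonneg (by linarith : (0:ℝ) ≤ 1 - t) (by linarith : (0:ℝ) ≤ t + p)]
      calc (1 / 2) * Real.log r = Real.log (1 / t) := hlog.symm
        _ ≤ _ := Real.log_le_log (by positivity) hratio
  have hbdd : BddBelow S := ⟨(1 / 2) * Real.log r, lb⟩
  -- the approximating family along p = 1
  set G : ℝ → ℝ := fun q => if q < 1 then
            Real.log (2 * 1 * (1 - q) /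
              (Real.sqrt ((1 - 1) ^ 2 + 4 * 1 * (1 - q) * (1 / r - 1 * q)) - (1 - 1)))
          else
            Real.log ((1 - 1) / (1 / r - 1)) with hGdef
  have hmem : ∀ q : ℝ, q ∈ Ioo (0:ℝ) (1 / r) → G q ∈ S := by
    intro q hq
    exact ⟨1, q, one_pos, le_refl 1, hq.1, (hq.2.trans hs1).le, by rw [one_mul]; exact hq.2, rfl⟩
  have hG : ∀ q ∈ Ioo (0:ℝ) (1 / r),
      G q = 1 / 2 * Real.log (1 - q) - 1 / 2 * Real.log (1 / r - q) := by
    intro q hq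
    obtain ⟨hq0, hqs⟩ := hq
    have hq1 : q < 1 := hqs.trans hs1
    have h1q : 0 < 1 - q := by linarith
    have hsq : 0 < 1 / r - q := by linarith
    rw [hGdef]
    simp only [if_pos hq1]
    have e1 : (1 - (1:ℝ)) ^ 2 + 4 * 1 * (1 - q) * (1 / r - 1 * q)
        = 2 ^ 2 * ((1 - q) * (1 / r - q)) := by ring
    rw [e1, Real.sqrt_mul (by norm_num : (0:ℝ) ≤ 2 ^ 2), Real.sqrt_sq (by norm_num : (0:ℝ) ≤ 2),
      Real.sqrt_mul h1q.le]
    have hs1q : (0:ℝ) < Real.sqrt (1 - q) := Real.sqrt_pos.mpr h1q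
    have hssq : (0:ℝ) < Real.sqrt (1 / r - q) := Real.sqrt_pos.mpr hsq
    have e3 : 2 * 1 * (1 - q) / (2 * (Real.sqrt (1 - q) * Real.sqrt (1 / r - q)) - (1 - 1))
        = Real.sqrt (1 - q) / Real.sqrt (1 / r - q) := by
      rw [show 2 * 1 * (1 - q) = 2 * (Real.sqrt (1 - q) * Real.sqrt (1 - q)) by
          rw [Real.mul_self_sqrt h1q.le]; ring,
        show 2 * (Real.sqrt (1 - q) * Real.sqrt (1 / r - q)) - (1 - 1)
            = 2 * (Real.sqrt (1 - q) * Real.sqrt (1 / r - q)) by ring,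
        mul_div_mul_left _ _ (two_ne_zero), mul_div_mul_left _ _ hs1q.ne']
    rw [e3, Real.log_div hs1q.ne' hssq.ne', Real.log_sqrt h1q.le, Real.log_sqrt hsq.le]
    ring
  have hT : Tendsto G (nhdsWithin 0 (Ioi 0)) (nhds ((1 / 2) * Real.log r)) := by
    have hc : Tendsto (fun q : ℝ => 1 / 2 * Real.log (1 - q) - 1 / 2 * Real.log (1 / r - q))
        (nhds 0) (nhds ((1 / 2) * Real.log r)) := by
      have c1 : ContinuousAt (fun q : ℝ => 1 / 2 * Real.log (1 - q) - 1 / 2 * Real.log (1 / r - q)) 0 := by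
        apply ContinuousAt.sub
        · exact (continuousAt_const.mul ((Real.continuousAt_log (by norm_num)).comp
            (by fun_prop)))
        · exact (continuousAt_const.mul ((Real.continuousAt_log (by simpa using hs0.ne')).comp
            (by fun_prop)))
      have := c1.tendsto
      simp only [sub_zero] at this
      convert this using 2
      rw [Real.log_one, one_div r, Real.log_inv]
      ring
    refine Tendsto.congr' ?_ (hc.mono_left nhdsWithin_le_nhds)
    filter_upwards [Ioo_mem_nhdsGT_of_mem (by constructor <;> [rfl; exact hs0] : (0:ℝ) ∈ Ico 0 (1 / r))] with q hq
    exact (hG q hq).symm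
  apply le_antisymm
  · refine ge_of_tendsto hT ?_
    filter_upwards [Ioo_mem_nhdsGT_of_mem (by constructor <;> [rfl; exact hs0] : (0:ℝ) ∈ Ico 0 (1 / r))] with q hq
    exact csInf_le hbdd (hmem q hq)
  · apply le_csInf
    · exact ⟨G (1 / (2 * r)), hmem _ ⟨by positivity, by rw [div_lt_div_iff₀ (by positivity) hr0]; nlinarith⟩⟩
    · exact lb
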